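/- Let A and B be groups with A abelian, and let N ◁ B be a normal subgroup. The natural projection π_B : B → B/N extends to a surjective homomorphism π : A ≀ B → A ≀ (B/N) defined by π(f)(bN) = ∏_{x∈N} f(bx) on the base and by π_B on B, and ker(π) = K_N ⋊ N where K_N = {f ∈ ⊕_B A : ∏_{x∈N} f(bx) = 1 for all b ∈ B}. -/

import Mathlib

open Function SemidirectProduct

def restrictedBase (A B : Type*) [Group A] [Group B] : Subgroup (B → A) where
  carrier := {f | (mulSupport f).Finite}
  one_mem' := by simp
  mul_mem' := fun {f g} hf hg => (hf.union hg).subset (mulSupport_mul f g)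
  inv_mem' := fun {f} hf => by simpa using hf

lemma shift_finite (A B : Type*) [Group A] [Group B] (b : B) {f : B → A}
    (hf : (mulSupport f).Finite) : (mulSupport fun x => f (b⁻¹ * x)).Finite := by
  apply (hf.image (fun x => b * x)).subset
  intro x hx
  exact ⟨b⁻¹ * x, hx, by simp⟩

def wreathAut (A B : Type*) [Group A] [Group B] (b : B) : MulAut (restrictedBase A B) where
  toFun f := ⟨fun x => (f : B → A) (b⁻¹ * x), shift_finite A B b f.2⟩
  invFun f := ⟨fun x => (f : B → A) (b * x), (by simpa using shift_finite A B b⁻¹ f.2 :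
    (mulSupport fun x => (f : B → A) (b * x)).Finite)⟩
  left_inv f := Subtype.ext (funext fun x => by simp)
  right_inv f := Subtype.ext (funext fun x => by simp)
  map_mul' f g := rfl

def wreathHom (A B : Type*) [Group A] [Group B] : B →* MulAut (restrictedBase A B) where
  toFun := wreathAut A B
  map_one' := by
    ext f x
    simp [wreathAut]
  map_mul' b c := by
    ext f x
    simp [wreathAut, mul_assoc]

abbrev Wreath (A B : Type*) [Group A] [Group B] :=
  restrictedBase A B ⋊[wreathHom A B] B

section Aux

variable {A B : Type*} [CommGroup A] [Group B] (N : Subgroup B) [N.Normal]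

lemma coset_prod (f : B → A) (b : B) :
    ∏ᶠ y ∈ ((QuotientGroup.mk : B → B ⧸ N) ⁻¹' {(b : B ⧸ N)}), f y
      = ∏ᶠ x : N, f (b * (x : B)) := by
  have hrange : ((QuotientGroup.mk : B → B ⧸ N) ⁻¹' {(b : B ⧸ N)})
      = Set.range (fun x : N => b * (x : B)) := by
    ext y
    simp only [Set.mem_preimage, Set.mem_singleton_iff, Set.mem_range]
    constructor
    · intro h
      have : b⁻¹ * y ∈ N := by
        have := (QuotientGroup.eq (s := N)).1 h
        simpa using N.inv_mem this
      exact ⟨⟨b⁻¹ * y, this⟩, by simp⟩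
    · rintro ⟨x, rfl⟩
      exact (QuotientGroup.eq (s := N)).2 (by simpa using N.inv_mem x.2)
  rw [hrange, finprod_mem_range]
  intro x y h
  exact Subtype.ext (mul_left_cancel h)

/-- the base-group component of the projection -/
noncomputable def projBase : restrictedBase A B →* restrictedBase A (B ⧸ N) where
  toFun f := ⟨fun q => ∏ᶠ y ∈ ((QuotientGroup.mk : B → B ⧸ N) ⁻¹' {q}), (f : B → A) y, by
    apply (f.2.image (QuotientGroup.mk : B → B ⧸ N)).subset
    intro q hq
    rw [mem_mulSupport] at hq
    by_contra hmem
    refine hq (finprod_mem_of_eqOn_one fun y hy => ?_)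
    by_contra hy1
    exact hmem ⟨y, hy1, hy⟩⟩
  map_one' := by
    refine Subtype.ext (funext fun q => ?_)
    simpa using finprod_mem_one ((QuotientGroup.mk : B → B ⧸ N) ⁻¹' {q})
  map_mul' f g := by
    refine Subtype.ext (funext fun q => ?_)
    show ∏ᶠ y ∈ _, (f : B → A) y * (g : B → A) y = _
    exact finprod_mem_mul_distrib' (Set.Finite.subset f.2 Set.inter_subset_right)
      (Set.Finite.subset g.2 Set.inter_subset_right)

lemma projBase_apply (f : restrictedBase A B) (b : B) :
    ((projBase N f : restrictedBase A (B ⧸ N)) : B ⧸ N → A) (b : B ⧸ N)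
      = ∏ᶠ x : N, (f : B → A) (b * (x : B)) :=
  coset_prod N _ b

lemma projBase_compat (g : B) :
    (projBase N (A := A)).comp (wreathHom A B g).toMonoidHom
      = ((wreathHom A (B ⧸ N)) (QuotientGroup.mk' N g)).toMonoidHom.comp (projBase N) := by
  ext f q
  induction q using QuotientGroup.induction_on with
  | H c =>
    show ((projBase N ((wreathHom A B g) f) : restrictedBase A (B ⧸ N)) : B ⧸ N → A) (c : B ⧸ N)
      = ((projBase N f : restrictedBase A (B ⧸ N)) : B ⧸ N → A) (((g : B ⧸ N))⁻¹ * (c : B ⧸ N))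
    have h1 : (((g : B ⧸ N))⁻¹ * (c : B ⧸ N)) = ((g⁻¹ * c : B) : B ⧸ N) := by
      simp
    rw [h1, projBase_apply, projBase_apply]
    refine finprod_congr fun x => ?_
    show (f : B → A) (g⁻¹ * (c * (x : B))) = (f : B → A) (g⁻¹ * c * (x : B))
    rw [mul_assoc]

lemma projBase_surjective : Function.Surjective (projBase N (A := A)) := by
  intro g
  classical
  set f : B → A := fun y => if y = Quotient.out ((y : B ⧸ N)) then (g : B ⧸ N → A) (y : B ⧸ N) else 1
    with hf
  have hfin : (mulSupport f).Finite := by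
    apply (g.2.image Quotient.out).subset
    intro y hy
    rw [mem_mulSupport] at hy
    simp only [hf] at hy
    split_ifs at hy with h
    · exact ⟨(y : B ⧸ N), hy, h.symm⟩
    · exact absurd rfl hy
  refine ⟨⟨f, hfin⟩, Subtype.ext (funext fun q => ?_)⟩
  induction q using QuotientGroup.induction_on with
  | H b =>
    rw [show ((projBase N ⟨f, hfin⟩ : restrictedBase A (B ⧸ N)) : B ⧸ N → A) ((b : B ⧸ N))
        = ∏ᶠ x : N, f (b * (x : B)) from projBase_apply N _ b]
    have hout : ((Quotient.out ((b : B ⧸ N)) : B) : B ⧸ N) = (b : B ⧸ N) := Quotient.out_eq _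
    have hmem : b⁻¹ * Quotient.out ((b : B ⧸ N)) ∈ N := by
      have := (QuotientGroup.eq (s := N)).1 hout.symm
      simpa using this
    set x₀ : N := ⟨b⁻¹ * Quotient.out ((b : B ⧸ N)), hmem⟩
    have hx₀ : b * (x₀ : B) = Quotient.out ((b : B ⧸ N)) := by
      simp [x₀]
    rw [finprod_eq_single _ x₀]
    · simp only [hf]
      rw [hx₀, hout, if_pos rfl]
    · intro x hx
      simp only [hf]
      rw [if_neg]
      intro hcontra
      apply hx
      have hq : ((b * (x : B) : B) : B ⧸ N) = (b : B ⧸ N) := by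
        refine (QuotientGroup.eq (s := N)).2 ?_
        simpa [mul_assoc] using N.inv_mem x.2
      rw [hq] at hcontra
      apply Subtype.ext
      have : b * (x : B) = b * (x₀ : B) := by rw [hcontra, hx₀]
      exact mul_left_cancel this

lemma projBase_eq_one_iff (f : restrictedBase A B) :
    projBase N f = 1 ↔ ∀ b : B, ∏ᶠ x : N, (f : B → A) (b * (x : B)) = 1 := by
  constructor
  · intro h b
    rw [← projBase_apply N f b, h]
    rfl
  · intro h
    refine Subtype.ext (funext fun q => ?_)
    induction q using QuotientGroup.induction_on with
    | H b => exact (projBase_apply N f b).trans (h b)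

end Aux

/-- For `A` abelian and `N ◁ B`, the projection `B → B/N` extends to a
surjective homomorphism `π : A ≀ B → A ≀ (B/N)` with `π(f)(bN) = ∏_{x∈N} f(bx)` on the
base and `π(b) = bN` on `B`, whose kernel is `K_N ⋊ N`. -/
theorem stmt4 (A B : Type*) [CommGroup A] [Group B] (N : Subgroup B) [N.Normal] :
    ∃ π : Wreath A B →* Wreath A (B ⧸ N),
      Function.Surjective π ∧
      (∀ b : B, π (SemidirectProduct.inr b) =
          SemidirectProduct.inr (QuotientGroup.mk b : B ⧸ N)) ∧
      (∀ f : restrictedBase A B,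
          (π (SemidirectProduct.inl f)).right = 1 ∧
          ∀ b : B, ((π (SemidirectProduct.inl f)).left : B ⧸ N → A) (QuotientGroup.mk b)
              = ∏ᶠ x : N, (f : B → A) (b * (x : B))) ∧
      (∀ w : Wreath A B, w ∈ π.ker ↔
          (w.right ∈ N ∧ ∀ b : B, ∏ᶠ x : N, (w.left : B → A) (b * (x : B)) = 1)) := by
  refine ⟨SemidirectProduct.map (projBase N) (QuotientGroup.mk' N) (projBase_compat N), ?_, ?_, ?_, ?_⟩
  · rintro ⟨g, q⟩
    obtain ⟨f, hf⟩ := projBase_surjective N g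
    obtain ⟨b, hb⟩ := QuotientGroup.mk'_surjective N q
    exact ⟨⟨f, b⟩, by ext <;> simp [hf, hb]⟩
  · intro b
    ext <;> simp
  · intro f
    refine ⟨by simp, fun b => ?_⟩
    rw [show (SemidirectProduct.map (projBase N) (QuotientGroup.mk' N) (projBase_compat N)
        (SemidirectProduct.inl f)).left = projBase N f by simp]
    exact projBase_apply N f b
  · intro w
    rw [MonoidHom.mem_ker, SemidirectProduct.ext_iff]
    simp only [map_left, map_right, QuotientGroup.mk'_apply]
    rw [show (1 : Wreath A (B ⧸ N)).left = 1 from rfl, show (1 : Wreath A (B ⧸ N)).right = 1 from rfl]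
    rw [projBase_eq_one_iff, QuotientGroup.eq_one_iff]
    tauto
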